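/- Fix ε ∈ (0,1) and a sequence (p_n) with 0 ≤ p_n ≤ 1 and p_n ≪ (log n)^{-ε}, and let ψ : ℕ → [0,1/2]. Then there is a constant C' (depending only on ε and the implied constant in the decay hypothesis) such that for all N ∈ ℕ: E[ ∑_{1 ≤ m,n ≤ N} λ(E_m^Q ∩ E_n^Q) ] ≤ C' · [ ( ∑_{n=1}^N p_n ψ(n) )² + ∑_{n=1}^N p_n ψ(n) ], where E denotes expectation over the random choice of P. In particular, if additionally ∑_{n=1}^N p_n ψ(n) ≥ 1, then E[ ∑_{1 ≤ m,n ≤ N} λ(E_m^Q ∩ E_n^Q) ] ≤ 2C' ( ∑_{n=1}^N p_n ψ(n) )². -/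

import Mathlib

open MeasureTheory ProbabilityTheory Filter Set

noncomputable section

/-- The approximation set `⋃_{a ∈ A} ((a-ψ(n))/n, (a+ψ(n))/n)`. -/
def approxSet (A : Set ℕ) (ψ : ℕ → ℝ) (n : ℕ) : Set ℝ :=
  ⋃ a ∈ A, Set.Ioo (((a : ℝ) - ψ n) / n) (((a : ℝ) + ψ n) / n)

/-- The set of partially reduced numerators: `a ∈ {1,…,n}` with `gcd(a,n) ≤ (log n)^{ε/2}`. -/
def Sred (ε : ℝ) (n : ℕ) : Set ℕ :=
  {a | 1 ≤ a ∧ a ≤ n ∧ (Nat.gcd a n : ℝ) ≤ Real.log n ^ (ε / 2)}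

/-- The random approximation set `E_n^Q`, with numerators in `Q_n = P_n ∩ S_n`. -/
def EQset (ε : ℝ) (P : ℕ → Set ℕ) (ψ : ℕ → ℝ) (n : ℕ) : Set ℝ :=
  approxSet (P n ∩ Sred ε n) ψ n


def Ioo2 (ψ : ℕ → ℝ) (n a : ℕ) : Set ℝ :=
  Set.Ioo (((a : ℝ) - ψ n) / n) (((a : ℝ) + ψ n) / n)

lemma vol_Ioo2 (ψ : ℕ → ℝ) (n a : ℕ) :
    volume (Ioo2 ψ n a) = ENNReal.ofReal (2 * ψ n / n) := by
  rw [Ioo2, Real.volume_Ioo, div_sub_div_same]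
  ring_nf

lemma vol_inter_left (ψ : ℕ → ℝ) (m n a b : ℕ) :
    volume (Ioo2 ψ m a ∩ Ioo2 ψ n b) ≤ ENNReal.ofReal (2 * ψ m / m) := by
  rw [← vol_Ioo2]; exact measure_mono inter_subset_left

lemma vol_inter_right (ψ : ℕ → ℝ) (m n a b : ℕ) :
    volume (Ioo2 ψ m a ∩ Ioo2 ψ n b) ≤ ENNReal.ofReal (2 * ψ n / n) := by
  rw [← vol_Ioo2]; exact measure_mono inter_subset_right

lemma close_of_nonempty (ψ : ℕ → ℝ) (m n a b : ℕ) (hm : 1 ≤ m) (hn : 1 ≤ n)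
    (h : (Ioo2 ψ m a ∩ Ioo2 ψ n b).Nonempty) :
    |(a : ℝ) * n - (b : ℝ) * m| < n * ψ m + m * ψ n := by
  obtain ⟨x, hx1, hx2⟩ := h
  have hm0 : (0:ℝ) < m := by exact_mod_cast hm
  have hn0 : (0:ℝ) < n := by exact_mod_cast hn
  rw [Ioo2, Set.mem_Ioo, div_lt_iff₀ hm0, lt_div_iff₀ hm0] at hx1
  rw [Ioo2, Set.mem_Ioo, div_lt_iff₀ hn0, lt_div_iff₀ hn0] at hx2
  have e : (a : ℝ) * n - (b : ℝ) * m = ((a:ℝ) - x * m) * n + (x * n - b) * m := by ring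
  calc |(a : ℝ) * n - (b : ℝ) * m| ≤ |(a:ℝ) - x*m| * n + |x*n - (b:ℝ)| * m := by
        rw [e]
        refine (abs_add_le _ _).trans ?_
        rw [abs_mul, abs_mul, abs_of_nonneg hn0.le, abs_of_nonneg hm0.le]
    _ < ψ m * n + ψ n * m := by
        gcongr
        · rw [abs_lt]; constructor <;> nlinarith [hx1.1, hx1.2]
        · rw [abs_lt]; constructor <;> nlinarith [hx2.1, hx2.2]
    _ = n * ψ m + m * ψ n := by ring

lemma disjoint_same (ψ : ℕ → ℝ) (m a b : ℕ) (hm : 1 ≤ m) (hψ : ψ m ≤ 1/2)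
    (hab : a ≠ b) : Ioo2 ψ m a ∩ Ioo2 ψ m b = ∅ := by
  by_contra h
  have hne : (Ioo2 ψ m a ∩ Ioo2 ψ m b).Nonempty := Set.nonempty_iff_ne_empty.2 h
  have := close_of_nonempty ψ m m a b hm hm hne
  have hm0 : (1:ℝ) ≤ m := by exact_mod_cast hm
  have h1 : (1:ℝ) ≤ |(a:ℝ) - b| := by
    have : (a:ℝ) ≠ b := by exact_mod_cast hab
    have hne' : (a:ℤ) - b ≠ 0 := sub_ne_zero.2 (by exact_mod_cast hab)
    have h2 : (1:ℤ) ≤ |(a:ℤ) - (b:ℤ)| := Int.one_le_abs hne'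
    calc (1:ℝ) ≤ |((a:ℤ) - (b:ℤ) : ℤ)| := by exact_mod_cast h2
      _ = |(a:ℝ) - b| := by push_cast; ring_nf
  have e : |(a:ℝ)*m - (b:ℝ)*m| = |(a:ℝ)-b| * m := by
    have hm0' : (0:ℝ) ≤ m := le_trans zero_le_one hm0
    rw [show (a:ℝ)*m - (b:ℝ)*m = ((a:ℝ)-b)*m by ring, abs_mul, abs_of_nonneg hm0']
  nlinarith [abs_nonneg ((a:ℝ) - b)]


-- divisibility of differences of solutions
lemma sol_dvd (m n : ℕ) (hm : 1 ≤ m) (a a' b b' t : ℤ)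
    (h1 : a * n - b * m = t) (h2 : a' * n - b' * m = t) :
    ((m / Nat.gcd m n : ℕ) : ℤ) ∣ (a - a') := by
  set g : ℕ := Nat.gcd m n with hg
  have hg0 : 0 < g := Nat.gcd_pos_of_pos_left n hm
  have hgm : (g:ℤ) ∣ m := Int.natCast_dvd_natCast.2 (Nat.gcd_dvd_left m n)
  have hgn : (g:ℤ) ∣ n := Int.natCast_dvd_natCast.2 (Nat.gcd_dvd_right m n)
  have hM : ((m / g : ℕ) : ℤ) = (m : ℤ) / g := Int.natCast_div m g
  have hN : ((n / g : ℕ) : ℤ) = (n : ℤ) / g := Int.natCast_div n g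
  have hcop : Nat.Coprime (m / g) (n / g) := Nat.coprime_div_gcd_div_gcd hg0
  have key : (a - a') * ((n / g : ℕ) : ℤ) = (b - b') * ((m / g : ℕ) : ℤ) := by
    have h3 : (a - a') * n = (b - b') * m := by linarith [h1, h2, sub_eq_zero.2 (h1.trans h2.symm)]
    have hmg : (m : ℤ) = ((m/g : ℕ):ℤ) * g := by
      rw [hM]; exact (Int.ediv_mul_cancel hgm).symm
    have hng : (n : ℤ) = ((n/g : ℕ):ℤ) * g := by
      rw [hN]; exact (Int.ediv_mul_cancel hgn).symm
    have hg0' : (g:ℤ) ≠ 0 := by exact_mod_cast hg0.ne'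
    have := h3
    rw [hmg, hng] at this
    have := mul_right_cancel₀ hg0' (by linarith [this] : ((a - a') * ((n/g:ℕ):ℤ)) * g = ((b - b') * ((m/g:ℕ):ℤ)) * g)
    exact this
  have hcop' : IsCoprime ((m/g : ℕ):ℤ) ((n/g : ℕ):ℤ) := Int.isCoprime_iff_gcd_eq_one.2 (by exact_mod_cast hcop)
  exact hcop'.dvd_of_dvd_mul_right ⟨b - b', by linarith [key]⟩

-- Lemma A: counting solutions
lemma count_sol (m n : ℕ) (hm : 1 ≤ m) (t : ℤ) :
    ((Finset.Icc 1 m ×ˢ Finset.Icc 1 n).filter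
      (fun q : ℕ × ℕ => (q.1 : ℤ) * n - (q.2 : ℤ) * m = t)).card ≤ Nat.gcd m n := by
  set g : ℕ := Nat.gcd m n with hg
  have hg0 : 0 < g := Nat.gcd_pos_of_pos_left n hm
  have hgm : g ∣ m := Nat.gcd_dvd_left m n
  set Q : ℕ := m / g with hQ
  have hq0 : 0 < Q := Nat.div_pos (Nat.le_of_dvd hm hgm) hg0
  have hQg : Q * g = m := Nat.div_mul_cancel hgm
  have hcard := Finset.card_range g
  rw [← hcard]
  apply Finset.card_le_card_of_injOn (fun q => (q.1 - 1) / Q)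
  · intro q hq
    simp only [Finset.mem_coe, Finset.mem_filter, Finset.mem_product, Finset.mem_Icc] at hq
    simp only [Finset.mem_coe, Finset.mem_range]
    exact Nat.div_lt_of_lt_mul (by omega : q.1 - 1 < Q * g)
  · intro q hq q' hq'
    simp only [Finset.coe_filter, Set.mem_setOf_eq, Finset.mem_product, Finset.mem_Icc] at hq hq'
    intro heq
    simp only at heq
    have hdvd := sol_dvd m n hm q.1 q'.1 q.2 q'.2 t hq.2 hq'.2
    rw [← hg, ← hQ] at hdvd
    have h1 : q.1 = q'.1 := by
      have e1 := Nat.div_add_mod (q.1 - 1) Q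
      have e2 := Nat.div_add_mod (q'.1 - 1) Q
      have hr1 : (q.1 - 1) % Q < Q := Nat.mod_lt _ hq0
      have hr2 : (q'.1 - 1) % Q < Q := Nat.mod_lt _ hq0
      have hz : (q.1 : ℤ) - q'.1 = ((q.1-1) % Q : ℕ) - (((q'.1-1) % Q : ℕ) : ℤ) := by
        have b1 := hq.1.1.1
        have b2 := hq'.1.1.1
        rw [heq] at e1
        omega
      rw [hz] at hdvd
      have habs : |(((q.1-1) % Q : ℕ):ℤ) - (((q'.1-1) % Q : ℕ):ℤ)| < Q := by
        rw [abs_lt]; omega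
      have := Int.eq_zero_of_abs_lt_dvd hdvd habs
      omega
    have h2 : q.2 = q'.2 := by
      have e1 := hq.2; have e2 := hq'.2
      rw [h1] at e1
      have : (q.2 : ℤ) * m = (q'.2 : ℤ) * m := by linarith
      have hm' : (m:ℤ) ≠ 0 := by exact_mod_cast (by omega : m ≠ 0)
      exact_mod_cast mul_right_cancel₀ hm' this
    exact Prod.ext h1 h2

-- g | t for solutions
lemma gcd_dvd_t (m n : ℕ) (a b : ℕ) (t : ℤ) (h : (a:ℤ) * n - (b:ℤ) * m = t) :
    ((Nat.gcd m n : ℕ) : ℤ) ∣ t := by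
  have hgm : ((Nat.gcd m n : ℕ):ℤ) ∣ (m:ℤ) := Int.natCast_dvd_natCast.2 (Nat.gcd_dvd_left m n)
  have hgn : ((Nat.gcd m n : ℕ):ℤ) ∣ (n:ℤ) := Int.natCast_dvd_natCast.2 (Nat.gcd_dvd_right m n)
  rw [← h]
  exact dvd_sub (Dvd.dvd.mul_left hgn a) (Dvd.dvd.mul_left hgm b)

-- Lemma C: t = 0 structure
lemma t0_dvd (m n a b : ℕ) (hm : 1 ≤ m) (hn : 1 ≤ n) (h : a * n = b * m) :
    (m / Nat.gcd m n) ∣ Nat.gcd a m := by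
  set g : ℕ := Nat.gcd m n with hg
  have hg0 : 0 < g := Nat.gcd_pos_of_pos_left n hm
  have hgm : g ∣ m := Nat.gcd_dvd_left m n
  have hgn : g ∣ n := Nat.gcd_dvd_right m n
  have hcop : Nat.Coprime (m / g) (n / g) := Nat.coprime_div_gcd_div_gcd hg0
  have key : a * (n / g) = b * (m / g) := by
    have : a * (n / g) * g = b * (m / g) * g := by
      rw [mul_assoc, mul_assoc, Nat.div_mul_cancel hgn, Nat.div_mul_cancel hgm, h]
    exact Nat.eq_of_mul_eq_mul_right hg0 this
  have : (m / g) ∣ a * (n / g) := ⟨b, by rw [key]; ring⟩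
  have hda : (m / g) ∣ a := (Nat.Coprime.dvd_of_dvd_mul_right hcop) this
  exact Nat.dvd_gcd hda (Nat.div_dvd_of_dvd hgm)
open scoped Classical

/-- numerator finset -/
def AmF (ε : ℝ) (m : ℕ) : Finset ℕ := (Finset.Icc 1 m).filter (fun a => a ∈ Sred ε m)

/-- the "resonance" condition between m and n -/
def CondMN (ε : ℝ) (m n : ℕ) : Prop :=
  ((m / Nat.gcd m n : ℕ) : ℝ) ≤ Real.log m ^ (ε / 2)
    ∧ ((n / Nat.gcd m n : ℕ) : ℝ) ≤ Real.log n ^ (ε / 2)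

lemma G_tne (ψ : ℕ → ℝ) (hψ : ∀ k, ψ k ∈ Set.Icc (0:ℝ) (1/2)) (m n : ℕ)
    (hm : 1 ≤ m) (hn : 1 ≤ n) :
    ∑ q ∈ (Finset.Icc 1 m ×ˢ Finset.Icc 1 n).filter
        (fun q : ℕ × ℕ => (q.1 : ℤ) * n - (q.2 : ℤ) * m ≠ 0),
      volume (Ioo2 ψ m q.1 ∩ Ioo2 ψ n q.2)
    ≤ ENNReal.ofReal (8 * ψ m * ψ n) := by
  set g : ℕ := Nat.gcd m n with hg
  have hg0 : 0 < g := Nat.gcd_pos_of_pos_left n hm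
  have hm0 : (0:ℝ) < m := by exact_mod_cast hm
  have hn0 : (0:ℝ) < n := by exact_mod_cast hn
  have hψm := hψ m; have hψn := hψ n
  rw [Set.mem_Icc] at hψm hψn
  set D : ℝ := n * ψ m + m * ψ n with hD
  have hD0 : 0 ≤ D := add_nonneg (mul_nonneg hn0.le hψm.1) (mul_nonneg hm0.le hψn.1)
  set M : ℕ := ⌊D / g⌋₊ with hM
  set T : ℕ × ℕ → ℤ := fun q => (q.1 : ℤ) * n - (q.2 : ℤ) * m with hT
  set v : ℕ × ℕ → ENNReal := fun q => volume (Ioo2 ψ m q.1 ∩ Ioo2 ψ n q.2) with hv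
  set s : Finset (ℕ × ℕ) := (Finset.Icc 1 m ×ˢ Finset.Icc 1 n).filter (fun q => T q ≠ 0) with hs
  -- restrict to nonzero terms
  have hsum : ∑ q ∈ s, v q = ∑ q ∈ s.filter (fun q => v q ≠ 0), v q :=
    (Finset.sum_filter_ne_zero s).symm
  set s2 : Finset (ℕ × ℕ) := s.filter (fun q => v q ≠ 0) with hs2
  set B : ENNReal := ENNReal.ofReal (min (2 * ψ m / m) (2 * ψ n / n)) with hB
  have hvB : ∀ q ∈ s2, v q ≤ B := by
    intro q _
    rcases min_cases (2 * ψ m / m) (2 * ψ n / n) with ⟨h, _⟩ | ⟨h, _⟩ <;> rw [hB, h]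
    · exact vol_inter_left ψ m n q.1 q.2
    · exact vol_inter_right ψ m n q.1 q.2
  have hcard : s2.card ≤ g * (2 * M) := by
    apply Finset.card_le_mul_card_image (f := T) s2 g ?fib |>.trans
    case fib =>
      intro τ hτ
      calc (s2.filter (fun q => T q = τ)).card
          ≤ ((Finset.Icc 1 m ×ˢ Finset.Icc 1 n).filter (fun q => T q = τ)).card := by
            apply Finset.card_le_card
            intro q hq
            simp only [Finset.mem_filter] at hq ⊢
            have := hq.1
            rw [hs2, Finset.mem_filter, hs, Finset.mem_filter] at this
            exact ⟨this.1.1, hq.2⟩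
        _ ≤ g := count_sol m n hm τ
    -- now bound card of image
    have himg : s2.image T ⊆ ((Finset.Icc (-(M:ℤ)) (M:ℤ)).erase 0).image (fun k : ℤ => k * (g:ℤ)) := by
      intro τ hτ
      rw [Finset.mem_image] at hτ
      obtain ⟨q, hq, hqτ⟩ := hτ
      rw [hs2, Finset.mem_filter, hs, Finset.mem_filter] at hq
      obtain ⟨⟨hqmem, hTne⟩, hvne⟩ := hq
      rw [Finset.mem_product, Finset.mem_Icc, Finset.mem_Icc] at hqmem
      have hdvd : (g : ℤ) ∣ τ := by rw [← hqτ]; exact gcd_dvd_t m n q.1 q.2 _ rfl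
      have hclose : ((|τ| : ℤ) : ℝ) < D := by
        have hne : (Ioo2 ψ m q.1 ∩ Ioo2 ψ n q.2).Nonempty := by
          rw [Set.nonempty_iff_ne_empty]
          intro he
          exact hvne (by rw [hv]; simp only; rw [he]; exact measure_empty)
        have h := close_of_nonempty ψ m n q.1 q.2 hm hn hne
        rw [Int.cast_abs]
        have e : ((τ:ℤ) : ℝ) = (q.1:ℝ) * n - (q.2:ℝ) * m := by
          rw [← hqτ]; simp only [hT]; push_cast; ring
        rw [e]; exact h
      obtain ⟨k, hk⟩ := hdvd
      rw [Finset.mem_image]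
      refine ⟨k, ?_, ?_⟩
      swap
      · show k * (g:ℤ) = τ
        rw [mul_comm]; exact hk.symm
      have hkne : k ≠ 0 := by
        intro h0
        rw [h0, mul_zero] at hk
        exact hTne (hqτ.trans hk)
      have hkM : |k| ≤ (M : ℤ) := by
        have hgR : (0:ℝ) < g := by exact_mod_cast hg0
        have h1 : |τ| = (g : ℤ) * |k| := by
          rw [hk, abs_mul, Int.abs_natCast]
        have h2 : (g:ℝ) * ((|k|:ℤ):ℝ) < D := by
          have := hclose; rw [h1] at this; push_cast at this ⊢; linarith
        have h3 : ((|k|:ℤ):ℝ) < D / g := by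
          rw [lt_div_iff₀ hgR]; linarith
        have hcast : ((|k|.toNat : ℕ) : ℝ) = ((|k| : ℤ) : ℝ) := by
          rw [← Int.cast_natCast, Int.toNat_of_nonneg (abs_nonneg k)]
        have h4 : (|k|.toNat : ℝ) ≤ D / g := by rw [hcast]; exact h3.le
        have h5 : |k|.toNat ≤ M := Nat.le_floor h4
        calc |k| = (|k|.toNat : ℤ) := (Int.toNat_of_nonneg (abs_nonneg k)).symm
          _ ≤ (M : ℤ) := by exact_mod_cast h5
      rw [Finset.mem_erase, Finset.mem_Icc]
      rw [abs_le] at hkM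
      exact ⟨hkne, hkM⟩
    calc g * (s2.image T).card ≤ g * (((Finset.Icc (-(M:ℤ)) (M:ℤ)).erase 0).image (fun k : ℤ => k * (g:ℤ))).card :=
          Nat.mul_le_mul_left g (Finset.card_le_card himg)
      _ ≤ g * (2 * M) := by
          apply Nat.mul_le_mul_left
          calc (((Finset.Icc (-(M:ℤ)) (M:ℤ)).erase 0).image (fun k : ℤ => k * (g:ℤ))).card
              ≤ ((Finset.Icc (-(M:ℤ)) (M:ℤ)).erase 0).card := Finset.card_image_le
            _ ≤ 2 * M := by
                have h0mem : (0:ℤ) ∈ Finset.Icc (-(M:ℤ)) (M:ℤ) := by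
                  rw [Finset.mem_Icc]; constructor <;> omega
                rw [Finset.card_erase_of_mem h0mem, Int.card_Icc]
                omega
  calc ∑ q ∈ s, v q = ∑ q ∈ s2, v q := hsum
    _ ≤ s2.card • B := Finset.sum_le_card_nsmul s2 v B hvB
    _ ≤ (g * (2 * M)) • B := by
        rw [nsmul_eq_mul, nsmul_eq_mul]
        exact mul_le_mul_left (by exact_mod_cast hcard) B
    _ ≤ ENNReal.ofReal (8 * ψ m * ψ n) := by
        rw [nsmul_eq_mul, hB, ← ENNReal.ofReal_natCast, ← ENNReal.ofReal_mul (by positivity)]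
        apply ENNReal.ofReal_le_ofReal
        have hMle : (M : ℝ) ≤ D / g := Nat.floor_le (by positivity)
        have hgR : (0:ℝ) < g := by exact_mod_cast hg0
        have hmin1 : min (2 * ψ m / m) (2 * ψ n / n) ≤ 2 * ψ m / m := min_le_left _ _
        have hmin2 : min (2 * ψ m / m) (2 * ψ n / n) ≤ 2 * ψ n / n := min_le_right _ _
        have hmin0 : 0 ≤ min (2 * ψ m / m) (2 * ψ n / n) :=
          le_min (div_nonneg (by linarith [hψm.1]) hm0.le) (div_nonneg (by linarith [hψn.1]) hn0.le)
        have hc : ((g * (2 * M) : ℕ) : ℝ) ≤ 2 * D := by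
          push_cast
          calc (g:ℝ) * (2 * M) ≤ g * (2 * (D / g)) := by
                apply mul_le_mul_of_nonneg_left _ hgR.le
                linarith
            _ = 2 * D := by field_simp
        calc ((g * (2 * M) : ℕ):ℝ) * min (2 * ψ m / m) (2 * ψ n / n)
            ≤ 2 * D * min (2 * ψ m / m) (2 * ψ n / n) := by
              apply mul_le_mul_of_nonneg_right hc hmin0
          _ ≤ 8 * ψ m * ψ n := by
              rw [hD]
              have e1 : (n:ℝ) * ψ m * (2 * ψ n / n) = 2 * ψ m * ψ n := by field_simp
              have e2 : (m:ℝ) * ψ n * (2 * ψ m / m) = 2 * ψ m * ψ n := by field_simp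
              nlinarith [mul_le_mul_of_nonneg_left hmin2 (mul_nonneg hn0.le hψm.1),
                mul_le_mul_of_nonneg_left hmin1 (mul_nonneg hm0.le hψn.1)]

lemma G_t0_bound (ψ : ℕ → ℝ) (hψ : ∀ k, ψ k ∈ Set.Icc (0:ℝ) (1/2)) (ε : ℝ) (m n : ℕ)
    (hm : 1 ≤ m) (hn : 1 ≤ n) :
    ∑ q ∈ (AmF ε m ×ˢ AmF ε n).filter
        (fun q : ℕ × ℕ => (q.1 : ℤ) * n - (q.2 : ℤ) * m = 0),
      volume (Ioo2 ψ m q.1 ∩ Ioo2 ψ n q.2)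
    ≤ ENNReal.ofReal (2 * ψ m) := by
  have hm0 : (0:ℝ) < m := by exact_mod_cast hm
  have hψm := hψ m
  rw [Set.mem_Icc] at hψm
  set s0 := (AmF ε m ×ˢ AmF ε n).filter
      (fun q : ℕ × ℕ => (q.1 : ℤ) * n - (q.2 : ℤ) * m = 0) with hs0
  have hcard : s0.card ≤ Nat.gcd m n := by
    refine le_trans (Finset.card_le_card ?_) (count_sol m n hm 0)
    intro q hq
    rw [hs0, Finset.mem_filter] at hq
    rw [Finset.mem_filter]
    refine ⟨?_, hq.2⟩
    rw [Finset.mem_product] at hq ⊢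
    exact ⟨Finset.mem_of_mem_filter _ hq.1.1, Finset.mem_of_mem_filter _ hq.1.2⟩
  calc ∑ q ∈ s0, volume (Ioo2 ψ m q.1 ∩ Ioo2 ψ n q.2)
      ≤ s0.card • ENNReal.ofReal (2 * ψ m / m) :=
        Finset.sum_le_card_nsmul _ _ _ (fun q _ => vol_inter_left ψ m n q.1 q.2)
    _ ≤ m • ENNReal.ofReal (2 * ψ m / m) := by
        have : s0.card ≤ m := hcard.trans (Nat.le_of_dvd hm (Nat.gcd_dvd_left m n))
        rw [nsmul_eq_mul, nsmul_eq_mul]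
        exact mul_le_mul_left (by exact_mod_cast this) _
    _ ≤ ENNReal.ofReal (2 * ψ m) := by
        rw [nsmul_eq_mul, ← ENNReal.ofReal_natCast, ← ENNReal.ofReal_mul (by positivity)]
        apply ENNReal.ofReal_le_ofReal
        rw [show (m:ℝ) * (2 * ψ m / m) = 2 * ψ m * (m / m) by ring, div_self hm0.ne', mul_one]

lemma G_t0_cond (ε : ℝ) (m n : ℕ) (hm : 1 ≤ m) (hn : 1 ≤ n)
    (h : ∃ q : ℕ × ℕ, q ∈ (AmF ε m ×ˢ AmF ε n).filter
        (fun q : ℕ × ℕ => (q.1 : ℤ) * n - (q.2 : ℤ) * m = 0)) :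
    CondMN ε m n := by
  obtain ⟨q, hq⟩ := h
  rw [Finset.mem_filter, Finset.mem_product] at hq
  obtain ⟨⟨ha, hb⟩, ht⟩ := hq
  rw [AmF, Finset.mem_filter] at ha hb
  obtain ⟨-, haS⟩ := ha
  obtain ⟨-, hbS⟩ := hb
  rw [Sred, Set.mem_setOf_eq] at haS hbS
  have heq : q.1 * n = q.2 * m := by exact_mod_cast sub_eq_zero.1 (by linarith [ht] : (q.1:ℤ)*n - (q.2:ℤ)*m = 0)
  have ha1 : 1 ≤ q.1 := haS.1
  have hb1 : 1 ≤ q.2 := hbS.1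
  constructor
  · have hdvd := t0_dvd m n q.1 q.2 hm hn heq
    have hgcd0 : 0 < Nat.gcd q.1 m := Nat.gcd_pos_of_pos_left m ha1
    have : (m / Nat.gcd m n : ℕ) ≤ Nat.gcd q.1 m := Nat.le_of_dvd hgcd0 hdvd
    calc ((m / Nat.gcd m n : ℕ):ℝ) ≤ (Nat.gcd q.1 m : ℝ) := by exact_mod_cast this
      _ ≤ Real.log m ^ (ε/2) := haS.2.2
  · have heq' : q.2 * m = q.1 * n := heq.symm
    have hdvd := t0_dvd n m q.2 q.1 hn hm heq'
    rw [Nat.gcd_comm n m] at hdvd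
    have hgcd0 : 0 < Nat.gcd q.2 n := Nat.gcd_pos_of_pos_left n hb1
    have : (n / Nat.gcd m n : ℕ) ≤ Nat.gcd q.2 n := Nat.le_of_dvd hgcd0 hdvd
    calc ((n / Nat.gcd m n : ℕ):ℝ) ≤ (Nat.gcd q.2 n : ℝ) := by exact_mod_cast this
      _ ≤ Real.log n ^ (ε/2) := hbS.2.2

lemma cond_n_le (ε : ℝ) (hε : ε ∈ Set.Ioo (0:ℝ) 1) (m n : ℕ) (hm : 1 ≤ m) (hn : 1 ≤ n)
    (h : CondMN ε m n) : (n:ℝ) ≤ 4 * (m:ℝ)^2 := by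
  obtain ⟨hε0, hε1⟩ := hε
  set g := Nat.gcd m n with hg
  have hg0 : 0 < g := Nat.gcd_pos_of_pos_left n hm
  have hgm : g ∣ m := Nat.gcd_dvd_left m n
  have hgn : g ∣ n := Nat.gcd_dvd_right m n
  have hgle : g ≤ m := Nat.le_of_dvd hm hgm
  have hm0 : (0:ℝ) < m := by exact_mod_cast hm
  have hn0 : (0:ℝ) < n := by exact_mod_cast hn
  have hnr : (n:ℝ) = (g:ℝ) * ((n/g : ℕ):ℝ) := by
    rw [← Nat.cast_mul]
    exact_mod_cast (Nat.mul_div_cancel' hgn).symm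
  have hstep : (n:ℝ) ≤ (m:ℝ) * ((n/g : ℕ):ℝ) := by
    rw [hnr]
    apply mul_le_mul_of_nonneg_right (by exact_mod_cast hgle) (Nat.cast_nonneg _)
  have hL := h.2
  have hlogn : 0 ≤ Real.log n := Real.log_nonneg (by exact_mod_cast hn)
  have hsq : (0:ℝ) < Real.sqrt n := Real.sqrt_pos.2 hn0
  have hmax : Real.log n ^ (ε/2) ≤ max 1 (2 * Real.sqrt n) := by
    by_cases h1 : Real.log n ≤ 1
    · exact le_trans (Real.rpow_le_one hlogn h1 (by linarith)) (le_max_left _ _)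
    · push_neg at h1
      have h2 : Real.log n ^ (ε/2) ≤ Real.log n ^ (1:ℝ) :=
        Real.rpow_le_rpow_of_exponent_le h1.le (by linarith)
      rw [Real.rpow_one] at h2
      have h3 : Real.log n ≤ 2 * Real.sqrt n := by
        have := Real.log_sqrt hn0.le
        have h4 : Real.log (Real.sqrt n) ≤ Real.sqrt n - 1 := Real.log_le_sub_one_of_pos hsq
        nlinarith
      exact le_trans h2 (le_trans h3 (le_max_right _ _))
  have hfinal : (n:ℝ) ≤ (m:ℝ) * max 1 (2 * Real.sqrt n) :=
    hstep.trans (mul_le_mul_of_nonneg_left (hL.trans hmax) hm0.le)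
  rcases max_cases 1 (2 * Real.sqrt n) with ⟨he, _⟩ | ⟨he, _⟩
  · rw [he, mul_one] at hfinal
    have hm1 : (1:ℝ) ≤ m := by exact_mod_cast hm
    nlinarith [hm1, hfinal]
  · rw [he] at hfinal
    have hsqn : Real.sqrt n * Real.sqrt n = n := Real.mul_self_sqrt hn0.le
    nlinarith [Real.sqrt_nonneg (n:ℝ)]

lemma two_le_log (m : ℕ) (hm : 9 ≤ m) : 2 ≤ Real.log m := by
  have hm0 : (0:ℝ) < m := by exact_mod_cast (by omega : 0 < m)
  rw [Real.le_log_iff_exp_le hm0]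
  have h1 : Real.exp 2 < 9 := by
    have h2 : Real.exp 2 = Real.exp 1 * Real.exp 1 := by
      rw [← Real.exp_add]; norm_num
    nlinarith [Real.exp_one_lt_d9, Real.exp_pos 1]
  have : (9:ℝ) ≤ m := by exact_mod_cast hm
  linarith

lemma condSum_bound (ε : ℝ) (hε : ε ∈ Set.Ioo (0:ℝ) 1) (p : ℕ → ℝ)
    (hp : ∀ n, p n ∈ Set.Icc (0:ℝ) 1) (C : ℝ)
    (hdecay : ∀ᶠ n : ℕ in Filter.atTop, p n ≤ C * Real.log n ^ (-ε)) :
    ∃ K, 0 ≤ K ∧ ∀ m : ℕ, 1 ≤ m → ∀ N : ℕ,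
      ∑ n ∈ (Finset.Icc 1 N).filter (fun n => CondMN ε m n), p n ≤ K := by
  obtain ⟨hε0, hε1⟩ := hε
  obtain ⟨M1, hM1⟩ := Filter.eventually_atTop.1 hdecay
  -- C is nonnegative
  have hC0 : 0 ≤ C := by
    have h3 := hM1 (max M1 3) (le_max_left _ _)
    have hlog : (0:ℝ) < Real.log (max M1 3 : ℕ) := by
      apply Real.log_pos
      have : (3:ℕ) ≤ max M1 3 := le_max_right _ _
      have h4 : (3:ℝ) ≤ ((max M1 3 : ℕ):ℝ) := by exact_mod_cast this
      linarith
    have hpow : (0:ℝ) < Real.log (max M1 3 : ℕ) ^ (-ε) := Real.rpow_pos_of_pos hlog _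
    have hpnn := (hp (max M1 3)).1
    by_contra hc
    push_neg at hc
    nlinarith
  set M0 : ℕ := (M1 + 3)^2 + 9 with hM0
  refine ⟨max (4*C) (4*((M0:ℝ))^2), le_max_of_le_left (by linarith), ?_⟩
  intro m hm N
  set adm := (Finset.Icc 1 N).filter (fun n => CondMN ε m n) with hadm
  have hadm_n : ∀ n ∈ adm, 1 ≤ n ∧ CondMN ε m n := by
    intro n hn
    rw [hadm, Finset.mem_filter, Finset.mem_Icc] at hn
    exact ⟨hn.1.1, hn.2⟩
  have hadm_le : ∀ n ∈ adm, (n:ℝ) ≤ 4*(m:ℝ)^2 := fun n hn =>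
    cond_n_le ε ⟨hε0, hε1⟩ m n hm (hadm_n n hn).1 (hadm_n n hn).2
  by_cases hcase : m < M0
  · -- small m: crude bound by the number of admissible n
    have hsub : adm ⊆ Finset.Icc 1 (4*m^2) := by
      intro n hn
      rw [Finset.mem_Icc]
      refine ⟨(hadm_n n hn).1, ?_⟩
      have := hadm_le n hn
      exact_mod_cast (by push_cast at this ⊢; linarith : (n:ℝ) ≤ ((4*m^2 : ℕ):ℝ))
    calc ∑ n ∈ adm, p n ≤ ∑ n ∈ adm, 1 := Finset.sum_le_sum (fun n _ => (hp n).2)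
      _ = adm.card := by rw [Finset.sum_const, nsmul_eq_mul, mul_one]
      _ ≤ (Finset.Icc 1 (4*m^2)).card := by exact_mod_cast Finset.card_le_card hsub
      _ = ((4*m^2 : ℕ):ℝ) := by rw [Nat.card_Icc, Nat.add_sub_cancel]
      _ = 4*(m:ℝ)^2 := by push_cast; ring
      _ ≤ max (4*C) (4*((M0:ℝ))^2) := by
          apply le_max_of_le_right
          have h1 : (m:ℝ) ≤ M0 := by exact_mod_cast hcase.le
          have h2 : (0:ℝ) ≤ m := Nat.cast_nonneg m
          push_cast at h1 ⊢
          nlinarith [h1, h2]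
  · -- large m
    push_neg at hcase
    have hm9 : 9 ≤ m := le_trans (by omega) hcase
    have hm0 : (0:ℝ) < m := by exact_mod_cast (by omega : 0 < m)
    have hlogm2 : 2 ≤ Real.log m := two_le_log m hm9
    have hlogm0 : 0 < Real.log m := by linarith
    set L : ℝ := Real.log m ^ (ε/2) with hL
    have hL1 : 1 ≤ L := Real.one_le_rpow (by linarith) (by linarith)
    have hL0 : 0 < L := by linarith
    -- (log m)^{ε/2} ≤ √m
    have hLsqrt : L ≤ Real.sqrt m := by
      have h1 : L ≤ Real.log m ^ ((1:ℝ)/2) :=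
        Real.rpow_le_rpow_of_exponent_le (by linarith) (by linarith)
      have h2 : Real.log m ^ ((1:ℝ)/2) ≤ (m:ℝ) ^ ((1:ℝ)/2) :=
        Real.rpow_le_rpow hlogm0.le (by linarith [Real.log_le_sub_one_of_pos hm0]) (by norm_num)
      rw [Real.sqrt_eq_rpow]
      calc L ≤ Real.log m ^ ((1:ℝ)/2) := h1
        _ ≤ (m:ℝ) ^ ((1:ℝ)/2) := h2
    -- every admissible n is at least √m
    have hnlb : ∀ n ∈ adm, Real.sqrt m ≤ (n:ℝ) := by
      intro n hn
      obtain ⟨hn1, hcond⟩ := hadm_n n hn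
      set g := Nat.gcd m n with hg
      have hg0 : 0 < g := Nat.gcd_pos_of_pos_left n hm
      have hgm : g ∣ m := Nat.gcd_dvd_left m n
      have hgn : g ∣ n := Nat.gcd_dvd_right m n
      have hng : (g:ℝ) ≤ n := by exact_mod_cast Nat.le_of_dvd hn1 hgn
      have hdq : (m:ℝ) = (g:ℝ) * ((m/g : ℕ):ℝ) := by
        rw [← Nat.cast_mul]; exact_mod_cast (Nat.mul_div_cancel' hgm).symm
      have hdq0 : (0:ℝ) < ((m/g : ℕ):ℝ) := by
        have : 0 < m / g := Nat.div_pos (Nat.le_of_dvd (by omega) hgm) hg0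
        exact_mod_cast this
      have h1 : (m:ℝ) / L ≤ g := by
        rw [div_le_iff₀ hL0, hdq]
        have := hcond.1
        rw [← hg] at this
        apply mul_le_mul_of_nonneg_left this (by positivity)
      have h2 : Real.sqrt m ≤ (m:ℝ) / L := by
        rw [le_div_iff₀ hL0]
        calc Real.sqrt m * L ≤ Real.sqrt m * Real.sqrt m := by
              apply mul_le_mul_of_nonneg_left hLsqrt (Real.sqrt_nonneg _)
          _ = m := Real.mul_self_sqrt hm0.le
      linarith
    -- consequences : n ≥ M1, log n ≥ (log m)/2, p n small
    have hsqrtm : (M1:ℝ) + 3 ≤ Real.sqrt m := by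
      have h1 : ((M1 + 3 : ℕ):ℝ)^2 ≤ m := by
        have hc := hcase
        simp only [hM0] at hc
        have hc : (M1+3)^2 + 9 ≤ m := hcase
        have : (M1+3)^2 ≤ m := by omega
        exact_mod_cast this
      have h2 := Real.sqrt_le_sqrt h1
      rw [Real.sqrt_sq (by positivity)] at h2
      push_cast at h2 ⊢
      linarith
    have hplarge : ∀ n ∈ adm, p n ≤ 2*C * Real.log m ^ (-ε) := by
      intro n hn
      have hnsq := hnlb n hn
      have hn1 := (hadm_n n hn).1
      have hnM1 : M1 ≤ n := by
        have : (M1:ℝ) ≤ n := by linarith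
        exact_mod_cast this
      have hlogn : Real.log m / 2 ≤ Real.log n := by
        have h1 : Real.log (Real.sqrt m) ≤ Real.log n :=
          Real.log_le_log (Real.sqrt_pos.2 hm0) hnsq
        rw [Real.log_sqrt hm0.le] at h1
        exact h1
      have hlogn0 : 0 < Real.log m / 2 := by linarith
      have h2 : Real.log n ^ (-ε) ≤ (Real.log m / 2) ^ (-ε) :=
        Real.rpow_le_rpow_of_nonpos hlogn0 hlogn (by linarith)
      have h3 : (Real.log m / 2 : ℝ) ^ (-ε) = (2:ℝ)^ε * Real.log m ^ (-ε) := by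
        rw [div_eq_mul_inv, Real.mul_rpow hlogm0.le (by norm_num : (0:ℝ) ≤ 2⁻¹),
          Real.inv_rpow (by norm_num : (0:ℝ) ≤ 2), Real.rpow_neg (by norm_num : (0:ℝ) ≤ 2), inv_inv]
        ring
      have h4 : (2:ℝ)^ε ≤ 2 := by
        calc (2:ℝ)^ε ≤ (2:ℝ)^(1:ℝ) := Real.rpow_le_rpow_of_exponent_le (by norm_num) (by linarith)
          _ = 2 := Real.rpow_one 2
      have h5 := hM1 n hnM1
      have hpow0 : (0:ℝ) ≤ Real.log m ^ (-ε) := (Real.rpow_pos_of_pos hlogm0 _).le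
      calc p n ≤ C * Real.log n ^ (-ε) := h5
        _ ≤ C * ((2:ℝ)^ε * Real.log m ^ (-ε)) := by
            rw [← h3]; exact mul_le_mul_of_nonneg_left h2 hC0
        _ = (2:ℝ)^ε * (C * Real.log m ^ (-ε)) := by ring
        _ ≤ 2 * (C * Real.log m ^ (-ε)) :=
            mul_le_mul_of_nonneg_right h4 (mul_nonneg hC0 hpow0)
        _ = 2*C * Real.log m ^ (-ε) := by ring
    -- injection into divisor pairs
    have hcard : adm.card ≤ ⌊L⌋₊ * ⌊2*L⌋₊ := by
      have h := Finset.card_le_card_of_injOn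
        (fun n => (m / Nat.gcd m n, n / Nat.gcd m n))
        (s := adm) (t := Finset.Icc 1 ⌊L⌋₊ ×ˢ Finset.Icc 1 ⌊2*L⌋₊) ?maps ?inj
      · rw [Finset.card_product, Nat.card_Icc, Nat.card_Icc, Nat.add_sub_cancel, Nat.add_sub_cancel] at h
        exact h
      case maps =>
        intro n hn
        obtain ⟨hn1, hcond⟩ := hadm_n n hn
        set g := Nat.gcd m n with hg
        have hg0 : 0 < g := Nat.gcd_pos_of_pos_left n hm
        have hgm : g ∣ m := Nat.gcd_dvd_left m n
        have hgn : g ∣ n := Nat.gcd_dvd_right m n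
        rw [Finset.mem_coe, Finset.mem_product, Finset.mem_Icc, Finset.mem_Icc]
        refine ⟨⟨Nat.div_pos (Nat.le_of_dvd (by omega) hgm) hg0, Nat.le_floor hcond.1⟩,
          ⟨Nat.div_pos (Nat.le_of_dvd hn1 hgn) hg0, Nat.le_floor ?_⟩⟩
        -- n/g ≤ 2L
        have hnle := hadm_le n hn
        have hn0 : (0:ℝ) < n := by exact_mod_cast hn1
        have hlogn3 : Real.log n ≤ 3 * Real.log m := by
          have h1 : Real.log n ≤ Real.log (4*(m:ℝ)^2) := by
            apply Real.log_le_log hn0 hnle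
          have h2 : Real.log (4*(m:ℝ)^2) = Real.log 4 + 2 * Real.log m := by
            rw [Real.log_mul (by norm_num) (by positivity), Real.log_pow]
            push_cast; ring
          have h3 : Real.log 4 ≤ Real.log m := by
            apply Real.log_le_log (by norm_num)
            have : (9:ℝ) ≤ m := by exact_mod_cast hm9
            linarith
          linarith
        have hlogn0 : 0 ≤ Real.log n := Real.log_nonneg (by exact_mod_cast hn1)
        calc ((n/g : ℕ):ℝ) ≤ Real.log n ^ (ε/2) := hcond.2
          _ ≤ (3 * Real.log m) ^ (ε/2) :=
              Real.rpow_le_rpow hlogn0 hlogn3 (by linarith)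
          _ = (3:ℝ)^(ε/2) * L := by
              rw [Real.mul_rpow (by norm_num) hlogm0.le]
          _ ≤ 2 * L := by
              have h1 : (3:ℝ)^(ε/2) ≤ (3:ℝ)^((1:ℝ)/2) :=
                Real.rpow_le_rpow_of_exponent_le (by norm_num) (by linarith)
              have h2 : (3:ℝ)^((1:ℝ)/2) ≤ 2 := by
                rw [← Real.sqrt_eq_rpow]
                rw [show (2:ℝ) = Real.sqrt 4 by rw [show (4:ℝ) = 2^2 by norm_num, Real.sqrt_sq (by norm_num)]]
                exact Real.sqrt_le_sqrt (by norm_num)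
              nlinarith
      case inj =>
        intro n1 hn1 n2 hn2 heq
        simp only [Prod.mk.injEq] at heq
        obtain ⟨he1, he2⟩ := heq
        have hmem1 := hadm_n n1 (by exact_mod_cast hn1)
        have hmem2 := hadm_n n2 (by exact_mod_cast hn2)
        have hg1m : Nat.gcd m n1 ∣ m := Nat.gcd_dvd_left m n1
        have hg2m : Nat.gcd m n2 ∣ m := Nat.gcd_dvd_left m n2
        have hgeq : Nat.gcd m n1 = Nat.gcd m n2 := by
          have h1 : m / (m / Nat.gcd m n1) = Nat.gcd m n1 :=
            Nat.div_div_self hg1m (by omega)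
          have h2 : m / (m / Nat.gcd m n2) = Nat.gcd m n2 :=
            Nat.div_div_self hg2m (by omega)
          rw [← h1, ← h2, he1]
        calc n1 = Nat.gcd m n1 * (n1 / Nat.gcd m n1) := (Nat.mul_div_cancel' (Nat.gcd_dvd_right m n1)).symm
          _ = Nat.gcd m n2 * (n2 / Nat.gcd m n2) := by rw [he2, hgeq]
          _ = n2 := Nat.mul_div_cancel' (Nat.gcd_dvd_right m n2)
    -- combine
    have hbound : ∑ n ∈ adm, p n ≤ (adm.card : ℝ) * (2*C * Real.log m ^ (-ε)) := by
      have := Finset.sum_le_card_nsmul adm p (2*C * Real.log m ^ (-ε)) hplarge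
      rwa [nsmul_eq_mul] at this
    have hpos : (0:ℝ) ≤ 2*C * Real.log m ^ (-ε) := by
      have := (Real.rpow_pos_of_pos hlogm0 (-ε)).le
      positivity
    calc ∑ n ∈ adm, p n ≤ (adm.card : ℝ) * (2*C * Real.log m ^ (-ε)) := hbound
      _ ≤ ((⌊L⌋₊ * ⌊2*L⌋₊ : ℕ):ℝ) * (2*C * Real.log m ^ (-ε)) := by
          apply mul_le_mul_of_nonneg_right _ hpos
          exact_mod_cast hcard
      _ ≤ (L * (2*L)) * (2*C * Real.log m ^ (-ε)) := by
          apply mul_le_mul_of_nonneg_right _ hpos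
          push_cast
          have f1 : (⌊L⌋₊:ℝ) ≤ L := Nat.floor_le hL0.le
          have f2 : (⌊2*L⌋₊:ℝ) ≤ 2*L := Nat.floor_le (by linarith)
          have f3 : (0:ℝ) ≤ ⌊L⌋₊ := Nat.cast_nonneg _
          have f4 : (0:ℝ) ≤ ⌊2*L⌋₊ := Nat.cast_nonneg _
          nlinarith
      _ = 4*C * (L * L * Real.log m ^ (-ε)) := by ring
      _ = 4*C := by
          rw [hL, ← Real.rpow_add hlogm0, ← Real.rpow_add hlogm0]
          norm_num
      _ ≤ max (4*C) (4*((M0:ℝ))^2) := le_max_left _ _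

lemma indep_pair {Ω : Type*} [MeasurableSpace Ω] (μ : Measure Ω)
    (A : ℕ × ℕ → Set Ω) (h : iIndepSet A μ) {q r : ℕ × ℕ} (hqr : q ≠ r) :
    μ (A q ∩ A r) = μ (A q) * μ (A r) := by
  have h2 := h.meas_biInter ({q, r} : Finset (ℕ × ℕ))
  rw [show ({q, r} : Finset (ℕ × ℕ)) = insert q {r} from rfl] at h2
  rw [Finset.set_biInter_insert, Finset.set_biInter_singleton,
    Finset.prod_insert (by simp [hqr]), Finset.prod_singleton] at h2
  exact h2

theorem stmt7
    {Ω : Type*} [MeasurableSpace Ω] (μ : Measure Ω) [IsProbabilityMeasure μ]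
    (ε : ℝ) (hε : ε ∈ Set.Ioo (0 : ℝ) 1)
    (p : ℕ → ℝ) (hp : ∀ n, p n ∈ Set.Icc (0 : ℝ) 1)
    (C : ℝ) (hdecay : ∀ᶠ n : ℕ in atTop, p n ≤ C * Real.log n ^ (-ε))
    (P : Ω → ℕ → Set ℕ)
    (hPsub : ∀ ω n, P ω n ⊆ Set.Icc 1 n)
    (hPmeas : ∀ n a : ℕ, MeasurableSet {ω | a ∈ P ω n})
    (hPprob : ∀ n a : ℕ, 1 ≤ a → a ≤ n → μ {ω | a ∈ P ω n} = ENNReal.ofReal (p n))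
    (hPindep : iIndepSet (fun q : ℕ × ℕ => {ω | q.2 ∈ P ω q.1}) μ)
    (ψ : ℕ → ℝ) (hψ : ∀ k, ψ k ∈ Set.Icc (0 : ℝ) (1 / 2)) :
    ∃ C' > (0 : ℝ), ∀ N : ℕ,
      (∫⁻ ω, ∑ m ∈ Finset.Icc 1 N, ∑ n ∈ Finset.Icc 1 N,
          volume (EQset ε (P ω) ψ m ∩ EQset ε (P ω) ψ n) ∂μ
        ≤ ENNReal.ofReal (C' * ((∑ n ∈ Finset.Icc 1 N, p n * ψ n) ^ 2
            + ∑ n ∈ Finset.Icc 1 N, p n * ψ n)))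
      ∧ (1 ≤ ∑ n ∈ Finset.Icc 1 N, p n * ψ n →
          ∫⁻ ω, ∑ m ∈ Finset.Icc 1 N, ∑ n ∈ Finset.Icc 1 N,
              volume (EQset ε (P ω) ψ m ∩ EQset ε (P ω) ψ n) ∂μ
            ≤ ENNReal.ofReal (2 * C' * (∑ n ∈ Finset.Icc 1 N, p n * ψ n) ^ 2)) := by
  classical
  obtain ⟨K, hK0, hK⟩ := condSum_bound ε hε p hp C hdecay
  set A : ℕ × ℕ → Set Ω := fun q => {ω | q.2 ∈ P ω q.1} with hA
  set v : ℕ → ℕ → ℕ → ℕ → ENNReal :=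
    fun m a n b => volume (Ioo2 ψ m a ∩ Ioo2 ψ n b) with hv
  refine ⟨10 + 2*K, by linarith, fun N => ?_⟩
  set S := ∑ n ∈ Finset.Icc 1 N, p n * ψ n with hS
  have hu0 : ∀ k, 0 ≤ p k * ψ k := fun k => mul_nonneg (hp k).1 (hψ k).1
  have hS0 : 0 ≤ S := Finset.sum_nonneg (fun k _ => hu0 k)
  have hAmF_mem : ∀ {k a : ℕ}, a ∈ AmF ε k → 1 ≤ a ∧ a ≤ k := by
    intro k a ha
    have := Finset.mem_of_mem_filter a ha
    rwa [Finset.mem_Icc] at this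
  have hAmF_card : ∀ k : ℕ, (AmF ε k).card ≤ k := by
    intro k
    calc (AmF ε k).card ≤ (Finset.Icc 1 k).card := Finset.card_le_card (Finset.filter_subset _ _)
      _ = k := by rw [Nat.card_Icc]; omega
  have hmeasind : ∀ (q r : ℕ × ℕ) (c : ENNReal),
      Measurable ((A q ∩ A r).indicator (fun _ => c)) := by
    intro q r c
    exact measurable_const.indicator ((hPmeas q.1 q.2).inter (hPmeas r.1 r.2))
  -- pointwise bound
  have hpoint : ∀ (ω : Ω) (m n : ℕ),
      volume (EQset ε (P ω) ψ m ∩ EQset ε (P ω) ψ n)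
        ≤ ∑ a ∈ AmF ε m, ∑ b ∈ AmF ε n,
            (A (m,a) ∩ A (n,b)).indicator (fun _ => v m a n b) ω := by
    intro ω m n
    have hsub : ∀ k, EQset ε (P ω) ψ k ⊆
        ⋃ a ∈ ((AmF ε k).filter (fun a => a ∈ P ω k) : Finset ℕ), Ioo2 ψ k a := by
      intro k x hx
      rw [EQset, approxSet] at hx
      obtain ⟨a, ha, hxa⟩ := Set.mem_iUnion₂.1 hx
      apply Set.mem_iUnion₂.2
      refine ⟨a, ?_, hxa⟩
      obtain ⟨haP, haS⟩ := ha
      have hab := hPsub ω k haP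
      rw [Set.mem_Icc] at hab
      simp only [Finset.mem_coe, Finset.mem_filter, AmF, Finset.mem_Icc]
      exact ⟨⟨⟨hab.1, hab.2⟩, haS⟩, haP⟩
    set Fm := (AmF ε m).filter (fun a => a ∈ P ω m) with hFm
    set Fn := (AmF ε n).filter (fun b => b ∈ P ω n) with hFn
    have step1 : volume (EQset ε (P ω) ψ m ∩ EQset ε (P ω) ψ n)
        ≤ ∑ a ∈ Fm, ∑ b ∈ Fn, v m a n b := by
      calc volume (EQset ε (P ω) ψ m ∩ EQset ε (P ω) ψ n)
          ≤ volume (⋃ a ∈ (Fm : Finset ℕ), (Ioo2 ψ m a ∩ EQset ε (P ω) ψ n)) := by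
            apply measure_mono
            intro x hx
            obtain ⟨a, ha, hxa⟩ := Set.mem_iUnion₂.1 (hsub m hx.1)
            exact Set.mem_iUnion₂.2 ⟨a, ha, ⟨hxa, hx.2⟩⟩
        _ ≤ ∑ a ∈ Fm, volume (Ioo2 ψ m a ∩ EQset ε (P ω) ψ n) :=
            measure_biUnion_finset_le _ _
        _ ≤ ∑ a ∈ Fm, ∑ b ∈ Fn, v m a n b := by
            apply Finset.sum_le_sum
            intro a _
            calc volume (Ioo2 ψ m a ∩ EQset ε (P ω) ψ n)
                ≤ volume (⋃ b ∈ (Fn : Finset ℕ), (Ioo2 ψ m a ∩ Ioo2 ψ n b)) := by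
                  apply measure_mono
                  intro x hx
                  obtain ⟨b, hb, hxb⟩ := Set.mem_iUnion₂.1 (hsub n hx.2)
                  exact Set.mem_iUnion₂.2 ⟨b, hb, ⟨hx.1, hxb⟩⟩
              _ ≤ ∑ b ∈ Fn, v m a n b := measure_biUnion_finset_le _ _
    refine step1.trans (le_of_eq ?_)
    rw [hFm, Finset.sum_filter]
    apply Finset.sum_congr rfl
    intro a _
    by_cases hPa : a ∈ P ω m
    · rw [if_pos hPa, hFn, Finset.sum_filter]
      apply Finset.sum_congr rfl
      intro b _
      by_cases hPb : b ∈ P ω n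
      · rw [if_pos hPb, Set.indicator_apply, if_pos]
        exact ⟨hPa, hPb⟩
      · rw [if_neg hPb, Set.indicator_apply, if_neg]
        intro hc
        exact hPb hc.2
    · rw [if_neg hPa]
      symm
      apply Finset.sum_eq_zero
      intro b _
      rw [Set.indicator_apply, if_neg]
      intro hc
      exact hPa hc.1
  -- integrate
  have hint : ∫⁻ ω, (∑ m ∈ Finset.Icc 1 N, ∑ n ∈ Finset.Icc 1 N, ∑ a ∈ AmF ε m, ∑ b ∈ AmF ε n,
        (A (m,a) ∩ A (n,b)).indicator (fun _ => v m a n b) ω) ∂μ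
      = ∑ m ∈ Finset.Icc 1 N, ∑ n ∈ Finset.Icc 1 N, ∑ a ∈ AmF ε m, ∑ b ∈ AmF ε n,
        v m a n b * μ (A (m,a) ∩ A (n,b)) := by
    rw [lintegral_finset_sum _ (fun m _ => Finset.measurable_sum _ (fun n _ =>
      Finset.measurable_sum _ (fun a _ => Finset.measurable_sum _ (fun b _ => hmeasind _ _ _))))]
    refine Finset.sum_congr rfl (fun m _ => ?_)
    rw [lintegral_finset_sum _ (fun n _ =>
      Finset.measurable_sum _ (fun a _ => Finset.measurable_sum _ (fun b _ => hmeasind _ _ _)))]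
    refine Finset.sum_congr rfl (fun n _ => ?_)
    rw [lintegral_finset_sum _ (fun a _ => Finset.measurable_sum _ (fun b _ => hmeasind _ _ _))]
    refine Finset.sum_congr rfl (fun a _ => ?_)
    rw [lintegral_finset_sum _ (fun b _ => hmeasind _ _ _)]
    refine Finset.sum_congr rfl (fun b _ => ?_)
    exact lintegral_indicator_const ((hPmeas m a).inter (hPmeas n b)) _
  -- per (m,n) bound
  have hmnle : ∀ m ∈ Finset.Icc 1 N, ∀ n ∈ Finset.Icc 1 N,
      ∑ a ∈ AmF ε m, ∑ b ∈ AmF ε n, v m a n b * μ (A (m,a) ∩ A (n,b))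
      ≤ ENNReal.ofReal (8 * (p m * ψ m) * (p n * ψ n))
        + (if m = n then ENNReal.ofReal (2 * (p m * ψ m)) else 0)
        + (if CondMN ε m n ∧ m ≠ n then ENNReal.ofReal (2 * ψ m * p m * p n) else 0) := by
    intro m hm n hn
    rw [Finset.mem_Icc] at hm hn
    have hψm := hψ m; have hψn := hψ n
    rw [Set.mem_Icc] at hψm hψn
    have hm0 : (0:ℝ) < m := by exact_mod_cast hm.1
    by_cases hmneq : m = n
    · subst hmneq
      have hdiag : ∑ a ∈ AmF ε m, ∑ b ∈ AmF ε m, v m a m b * μ (A (m,a) ∩ A (m,b))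
          ≤ ENNReal.ofReal (2 * (p m * ψ m)) := by
        have hterm : ∀ a ∈ AmF ε m,
            ∑ b ∈ AmF ε m, v m a m b * μ (A (m,a) ∩ A (m,b))
            ≤ ENNReal.ofReal (2 * ψ m / m * p m) := by
          intro a ha
          have hab := hAmF_mem ha
          calc ∑ b ∈ AmF ε m, v m a m b * μ (A (m,a) ∩ A (m,b))
              ≤ ∑ b ∈ AmF ε m, (if b = a then ENNReal.ofReal (2 * ψ m / m * p m) else 0) := by
                apply Finset.sum_le_sum
                intro b _
                by_cases hba : b = a
                · subst hba
                  rw [if_pos rfl, Set.inter_self]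
                  have h1 : μ (A (m, b)) = ENNReal.ofReal (p m) := by
                    rw [hA]
                    exact hPprob m b (hAmF_mem ‹b ∈ AmF ε m›).1 (hAmF_mem ‹b ∈ AmF ε m›).2
                  rw [h1, ENNReal.ofReal_mul (div_nonneg (by linarith [hψm.1]) hm0.le)]
                  exact mul_le_mul_left (vol_inter_left ψ m m b b) _
                · rw [if_neg hba]
                  have : v m a m b = 0 := by
                    rw [hv]
                    simp only
                    rw [disjoint_same ψ m a b hm.1 hψm.2 (fun h => hba h.symm)]
                    exact measure_empty
                  rw [this, zero_mul]
            _ = if a ∈ AmF ε m then ENNReal.ofReal (2 * ψ m / m * p m) else 0 :=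
                Finset.sum_ite_eq' _ a _
            _ ≤ ENNReal.ofReal (2 * ψ m / m * p m) := by rw [if_pos ha]
        calc ∑ a ∈ AmF ε m, ∑ b ∈ AmF ε m, v m a m b * μ (A (m,a) ∩ A (m,b))
            ≤ (AmF ε m).card • ENNReal.ofReal (2 * ψ m / m * p m) :=
              Finset.sum_le_card_nsmul _ _ _ hterm
          _ ≤ m • ENNReal.ofReal (2 * ψ m / m * p m) := by
              rw [nsmul_eq_mul, nsmul_eq_mul]
              exact mul_le_mul_left (by exact_mod_cast hAmF_card m) _
          _ ≤ ENNReal.ofReal (2 * (p m * ψ m)) := by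
              rw [nsmul_eq_mul, ← ENNReal.ofReal_natCast, ← ENNReal.ofReal_mul (Nat.cast_nonneg m)]
              apply ENNReal.ofReal_le_ofReal
              rw [show (m:ℝ) * (2 * ψ m / m * p m) = 2 * (p m * ψ m) * (m / m) by ring,
                div_self hm0.ne', mul_one]
      rw [if_pos rfl]
      have htri : ∀ (x y z : ENNReal), y ≤ x + y + z := by
        intro x y z
        calc y ≤ x + y := le_add_self
          _ ≤ x + y + z := le_self_add
      exact hdiag.trans (htri _ _ _)
    · -- off-diagonal
      have hμ : ∀ a ∈ AmF ε m, ∀ b ∈ AmF ε n,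
          μ (A (m,a) ∩ A (n,b)) = ENNReal.ofReal (p m) * ENNReal.ofReal (p n) := by
        intro a ha b hb
        rw [indep_pair μ A hPindep (fun h => hmneq (congrArg Prod.fst h))]
        rw [hA]
        rw [hPprob m a (hAmF_mem ha).1 (hAmF_mem ha).2,
          hPprob n b (hAmF_mem hb).1 (hAmF_mem hb).2]
      have hfac : ∑ a ∈ AmF ε m, ∑ b ∈ AmF ε n, v m a n b * μ (A (m,a) ∩ A (n,b))
          = (∑ a ∈ AmF ε m, ∑ b ∈ AmF ε n, v m a n b)
            * (ENNReal.ofReal (p m) * ENNReal.ofReal (p n)) := by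
        rw [Finset.sum_mul]
        refine Finset.sum_congr rfl (fun a ha => ?_)
        rw [Finset.sum_mul]
        exact Finset.sum_congr rfl (fun b hb => by rw [hμ a ha b hb])
      rw [hfac]
      -- split the double sum along t = 0
      have hsplitle : (∑ a ∈ AmF ε m, ∑ b ∈ AmF ε n, v m a n b)
          ≤ ENNReal.ofReal (8 * ψ m * ψ n)
            + (if CondMN ε m n then ENNReal.ofReal (2 * ψ m) else 0) := by
        rw [← Finset.sum_product (AmF ε m) (AmF ε n) (fun q => v m q.1 n q.2)]
        rw [← Finset.sum_filter_add_sum_filter_not (AmF ε m ×ˢ AmF ε n)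
          (fun q : ℕ × ℕ => (q.1 : ℤ) * n - (q.2 : ℤ) * m = 0)]
        rw [add_comm]
        apply add_le_add
        · -- t ≠ 0 part
          refine le_trans (Finset.sum_le_sum_of_subset ?_) (G_tne ψ hψ m n hm.1 hn.1)
          apply Finset.filter_subset_filter
          apply Finset.product_subset_product (Finset.filter_subset _ _) (Finset.filter_subset _ _)
        · -- t = 0 part
          by_cases hne : ((AmF ε m ×ˢ AmF ε n).filter
              (fun q : ℕ × ℕ => (q.1 : ℤ) * n - (q.2 : ℤ) * m = 0)).Nonempty
          · have hcond := G_t0_cond ε m n hm.1 hn.1 hne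
            rw [if_pos hcond]
            exact G_t0_bound ψ hψ ε m n hm.1 hn.1
          · rw [Finset.not_nonempty_iff_eq_empty.1 hne, Finset.sum_empty]
            exact zero_le
      calc (∑ a ∈ AmF ε m, ∑ b ∈ AmF ε n, v m a n b)
            * (ENNReal.ofReal (p m) * ENNReal.ofReal (p n))
          ≤ (ENNReal.ofReal (8 * ψ m * ψ n)
              + (if CondMN ε m n then ENNReal.ofReal (2 * ψ m) else 0))
            * (ENNReal.ofReal (p m) * ENNReal.ofReal (p n)) :=
            mul_le_mul_left hsplitle _
        _ ≤ ENNReal.ofReal (8 * (p m * ψ m) * (p n * ψ n))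
            + (if m = n then ENNReal.ofReal (2 * (p m * ψ m)) else 0)
            + (if CondMN ε m n ∧ m ≠ n then ENNReal.ofReal (2 * ψ m * p m * p n) else 0) := by
            rw [add_mul, if_neg hmneq, add_zero]
            have h8 : (0:ℝ) ≤ 8 * ψ m * ψ n :=
              mul_nonneg (mul_nonneg (by norm_num) hψm.1) hψn.1
            have h2ψ : (0:ℝ) ≤ 2 * ψ m := by linarith [hψm.1]
            have e1 : ENNReal.ofReal (8 * ψ m * ψ n)
                * (ENNReal.ofReal (p m) * ENNReal.ofReal (p n))
                = ENNReal.ofReal (8 * (p m * ψ m) * (p n * ψ n)) := by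
              rw [show ENNReal.ofReal (p m) * ENNReal.ofReal (p n)
                  = ENNReal.ofReal (p m * p n) from (ENNReal.ofReal_mul (hp m).1).symm,
                ← ENNReal.ofReal_mul h8]
              congr 1
              ring
            have e2 : (if CondMN ε m n then ENNReal.ofReal (2 * ψ m) else 0)
                * (ENNReal.ofReal (p m) * ENNReal.ofReal (p n))
                = (if CondMN ε m n ∧ m ≠ n then ENNReal.ofReal (2 * ψ m * p m * p n) else 0) := by
              by_cases hc : CondMN ε m n
              · rw [if_pos hc, if_pos ⟨hc, hmneq⟩, ← mul_assoc,
                  ← ENNReal.ofReal_mul h2ψ,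
                  ← ENNReal.ofReal_mul (mul_nonneg h2ψ (hp m).1)]
              · rw [if_neg hc, if_neg (fun h => hc h.1), zero_mul]
            rw [e1, e2]
  -- assemble everything
  set I := Finset.Icc 1 N with hI
  have main : ∫⁻ ω, ∑ m ∈ I, ∑ n ∈ I,
      volume (EQset ε (P ω) ψ m ∩ EQset ε (P ω) ψ n) ∂μ
      ≤ ENNReal.ofReal (8*S^2 + 2*S + 2*K*S) := by
    have h1 : ∫⁻ ω, ∑ m ∈ I, ∑ n ∈ I,
        volume (EQset ε (P ω) ψ m ∩ EQset ε (P ω) ψ n) ∂μ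
        ≤ ∫⁻ ω, (∑ m ∈ I, ∑ n ∈ I, ∑ a ∈ AmF ε m, ∑ b ∈ AmF ε n,
            (A (m,a) ∩ A (n,b)).indicator (fun _ => v m a n b) ω) ∂μ :=
      lintegral_mono (fun ω => Finset.sum_le_sum (fun m _ =>
        Finset.sum_le_sum (fun n _ => hpoint ω m n)))
    have h2 : ∑ m ∈ I, ∑ n ∈ I, ∑ a ∈ AmF ε m, ∑ b ∈ AmF ε n,
        v m a n b * μ (A (m,a) ∩ A (n,b))
        ≤ ∑ m ∈ I, ∑ n ∈ I,
          (ENNReal.ofReal (8 * (p m * ψ m) * (p n * ψ n))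
            + (if m = n then ENNReal.ofReal (2 * (p m * ψ m)) else 0)
            + (if CondMN ε m n ∧ m ≠ n then ENNReal.ofReal (2 * ψ m * p m * p n) else 0)) :=
      Finset.sum_le_sum (fun m hm => Finset.sum_le_sum (fun n hn => hmnle m hm n hn))
    have hdist : ∑ m ∈ I, ∑ n ∈ I,
          (ENNReal.ofReal (8 * (p m * ψ m) * (p n * ψ n))
            + (if m = n then ENNReal.ofReal (2 * (p m * ψ m)) else 0)
            + (if CondMN ε m n ∧ m ≠ n then ENNReal.ofReal (2 * ψ m * p m * p n) else 0))
        = (∑ m ∈ I, ∑ n ∈ I, ENNReal.ofReal (8 * (p m * ψ m) * (p n * ψ n)))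
          + (∑ m ∈ I, ∑ n ∈ I, (if m = n then ENNReal.ofReal (2 * (p m * ψ m)) else 0))
          + (∑ m ∈ I, ∑ n ∈ I, (if CondMN ε m n ∧ m ≠ n
              then ENNReal.ofReal (2 * ψ m * p m * p n) else 0)) := by
      simp only [Finset.sum_add_distrib]
    have hP1 : ∑ m ∈ I, ∑ n ∈ I, ENNReal.ofReal (8 * (p m * ψ m) * (p n * ψ n))
        = ENNReal.ofReal (8*S^2) := by
      have hreal : 8*S^2 = ∑ m ∈ I, ∑ n ∈ I, 8 * (p m * ψ m) * (p n * ψ n) := by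
        rw [hS, sq, Finset.sum_mul_sum, Finset.mul_sum]
        refine Finset.sum_congr rfl (fun m _ => ?_)
        rw [Finset.mul_sum]
        exact Finset.sum_congr rfl (fun n _ => by ring)
      rw [hreal, ENNReal.ofReal_sum_of_nonneg (fun m _ => Finset.sum_nonneg (fun n _ =>
        mul_nonneg (mul_nonneg (by norm_num) (hu0 m)) (hu0 n)))]
      exact Finset.sum_congr rfl (fun m _ => (ENNReal.ofReal_sum_of_nonneg (fun n _ =>
        mul_nonneg (mul_nonneg (by norm_num) (hu0 m)) (hu0 n))).symm)
    have hP2 : ∑ m ∈ I, ∑ n ∈ I, (if m = n then ENNReal.ofReal (2 * (p m * ψ m)) else 0)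
        = ENNReal.ofReal (2*S) := by
      have hinner : ∀ m ∈ I, ∑ n ∈ I, (if m = n then ENNReal.ofReal (2 * (p m * ψ m)) else 0)
          = ENNReal.ofReal (2 * (p m * ψ m)) := by
        intro m hm
        rw [Finset.sum_ite_eq I m (fun _ => ENNReal.ofReal (2 * (p m * ψ m))), if_pos hm]
      rw [Finset.sum_congr rfl hinner]
      rw [show 2*S = ∑ m ∈ I, 2 * (p m * ψ m) by rw [hS, Finset.mul_sum]]
      exact (ENNReal.ofReal_sum_of_nonneg (fun k _ => by linarith [hu0 k])).symm
    have hP3 : ∑ m ∈ I, ∑ n ∈ I, (if CondMN ε m n ∧ m ≠ n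
          then ENNReal.ofReal (2 * ψ m * p m * p n) else 0)
        ≤ ENNReal.ofReal (2*K*S) := by
      have hinner : ∀ m ∈ I, ∑ n ∈ I, (if CondMN ε m n ∧ m ≠ n
            then ENNReal.ofReal (2 * ψ m * p m * p n) else 0)
          ≤ ENNReal.ofReal (2 * ψ m * p m * K) := by
        intro m hm
        rw [hI, Finset.mem_Icc] at hm
        have hψm1 := (hψ m).1
        have hcoef : (0:ℝ) ≤ 2 * ψ m * p m :=
          mul_nonneg (by linarith) (hp m).1
        calc ∑ n ∈ I, (if CondMN ε m n ∧ m ≠ n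
              then ENNReal.ofReal (2 * ψ m * p m * p n) else 0)
            ≤ ∑ n ∈ I, (if CondMN ε m n
              then ENNReal.ofReal (2 * ψ m * p m * p n) else 0) := by
              apply Finset.sum_le_sum
              intro n _
              by_cases hc : CondMN ε m n ∧ m ≠ n
              · rw [if_pos hc, if_pos hc.1]
              · rw [if_neg hc]
                exact zero_le
          _ = ∑ n ∈ I.filter (fun n => CondMN ε m n),
              ENNReal.ofReal (2 * ψ m * p m * p n) := (Finset.sum_filter _ _).symm
          _ = ENNReal.ofReal (∑ n ∈ I.filter (fun n => CondMN ε m n),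
              2 * ψ m * p m * p n) := (ENNReal.ofReal_sum_of_nonneg (fun n hn =>
                mul_nonneg hcoef (hp n).1)).symm
          _ ≤ ENNReal.ofReal (2 * ψ m * p m * K) := by
              apply ENNReal.ofReal_le_ofReal
              rw [← Finset.mul_sum]
              exact mul_le_mul_of_nonneg_left (hK m hm.1 N) hcoef
      calc ∑ m ∈ I, ∑ n ∈ I, (if CondMN ε m n ∧ m ≠ n
            then ENNReal.ofReal (2 * ψ m * p m * p n) else 0)
          ≤ ∑ m ∈ I, ENNReal.ofReal (2 * ψ m * p m * K) := Finset.sum_le_sum hinner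
        _ = ENNReal.ofReal (2*K*S) := by
            have hreal3 : 2*K*S = ∑ m ∈ I, 2 * ψ m * p m * K := by
              rw [hS, Finset.mul_sum]
              exact Finset.sum_congr rfl (fun m _ => by ring)
            rw [hreal3]
            exact (ENNReal.ofReal_sum_of_nonneg (fun m _ =>
              mul_nonneg (mul_nonneg (mul_nonneg (by norm_num) (hψ m).1) (hp m).1) hK0)).symm
    calc ∫⁻ ω, ∑ m ∈ I, ∑ n ∈ I,
          volume (EQset ε (P ω) ψ m ∩ EQset ε (P ω) ψ n) ∂μ
        ≤ ∑ m ∈ I, ∑ n ∈ I, ∑ a ∈ AmF ε m, ∑ b ∈ AmF ε n,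
            v m a n b * μ (A (m,a) ∩ A (n,b)) := h1.trans (le_of_eq hint)
      _ ≤ _ := h2
      _ = _ := hdist
      _ ≤ ENNReal.ofReal (8*S^2) + ENNReal.ofReal (2*S) + ENNReal.ofReal (2*K*S) := by
          rw [hP1, hP2]
          exact add_le_add_right hP3 _
      _ = ENNReal.ofReal (8*S^2 + 2*S + 2*K*S) := by
          rw [ENNReal.ofReal_add (by positivity) (by nlinarith [hS0, hK0]),
            ENNReal.ofReal_add (by positivity) (by linarith [hS0])]
  constructor
  · refine main.trans (ENNReal.ofReal_le_ofReal ?_)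
    nlinarith [hS0, hK0, sq_nonneg S, mul_nonneg hK0 hS0,
      mul_nonneg hK0 (sq_nonneg S)]
  · intro hS1
    refine main.trans (ENNReal.ofReal_le_ofReal ?_)
    have hSS : S ≤ S^2 := by nlinarith
    nlinarith [hS0, hK0, mul_le_mul_of_nonneg_left hSS hK0]
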